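/- Let G₀ be the cdf of the uniform distribution on [1/4, 3/4]. For every cdf G of a probability distribution on [0,1] with G ≠ G₀, we have I(G) > I(G₀) = 5/24, where I(G) = ∫₀¹ ∫₀ˣ (1 - G(x) + G(y))² dy dx. In other words, the uniform distribution on [1/4,3/4] is the unique minimizer of I over cdfs on [0,1]. -/

import Mathlib

open MeasureTheory Set



/-- The cdf of the uniform distribution on `[1/4, 3/4]`. -/
noncomputable def G₀ (x : ℝ) : ℝ := max 0 (min 1 (2 * x - 1/2))

lemma G0_cont : Continuous G₀ := by
  unfold G₀; fun_prop

lemma G0_nonneg (x : ℝ) : 0 ≤ G₀ x := le_max_left _ _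

lemma G0_le_one (x : ℝ) : G₀ x ≤ 1 := by
  unfold G₀
  rcases le_or_gt 1 (2*x - 1/2) with h | h
  · simp [min_eq_left h]
  · have : min 1 (2*x-1/2) ≤ 1 := min_le_left _ _
    exact max_le (by norm_num) this

lemma G0_left {x : ℝ} (h : x ≤ 1/4) : G₀ x = 0 := by
  unfold G₀
  have : 2*x - 1/2 ≤ 0 := by linarith
  have h2 : min 1 (2*x - 1/2) = 2*x - 1/2 := min_eq_right (by linarith)
  rw [h2, max_eq_left this]

lemma G0_mid {x : ℝ} (h1 : 1/4 ≤ x) (h2 : x ≤ 3/4) : G₀ x = 2*x - 1/2 := by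
  unfold G₀
  have h3 : min 1 (2*x - 1/2) = 2*x - 1/2 := min_eq_right (by linarith)
  rw [h3, max_eq_right (by linarith)]

lemma G0_right {x : ℝ} (h : 3/4 ≤ x) : G₀ x = 1 := by
  unfold G₀
  rw [min_eq_left (by linarith), max_eq_right (by norm_num)]

lemma G0_mono : Monotone G₀ := by
  intro a b hab
  unfold G₀
  have : 2*a - 1/2 ≤ 2*b - 1/2 := by linarith
  exact max_le_max le_rfl (min_le_min le_rfl this)

/-- Cubic polynomial interval integral. -/
lemma integral_poly3 (a b c0 c1 c2 c3 : ℝ) :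
    ∫ x in a..b, (c0 + c1*x + c2*x^2 + c3*x^3) =
      (c0*b + c1*b^2/2 + c2*b^3/3 + c3*b^4/4) - (c0*a + c1*a^2/2 + c2*a^3/3 + c3*a^4/4) := by
  have hd : ∀ x ∈ Set.uIcc a b, HasDerivAt (fun x => c0*x + c1*x^2/2 + c2*x^3/3 + c3*x^4/4)
      (c0 + c1*x + c2*x^2 + c3*x^3) x := by
    intro x _
    have h1 : HasDerivAt (fun x : ℝ => c0*x) c0 x := by
      simpa using (hasDerivAt_id x).const_mul c0
    have h2 : HasDerivAt (fun x : ℝ => c1*x^2/2) (c1*x) x := by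
      have := ((hasDerivAt_pow 2 x).const_mul c1).div_const 2
      exact this.congr_deriv (by push_cast; ring)
    have h3 : HasDerivAt (fun x : ℝ => c2*x^3/3) (c2*x^2) x := by
      have := ((hasDerivAt_pow 3 x).const_mul c2).div_const 3
      exact this.congr_deriv (by push_cast; ring)
    have h4 : HasDerivAt (fun x : ℝ => c3*x^4/4) (c3*x^3) x := by
      have := ((hasDerivAt_pow 4 x).const_mul c3).div_const 4
      exact this.congr_deriv (by push_cast; ring)
    exact ((h1.add h2).add h3).add h4
  rw [intervalIntegral.integral_eq_sub_of_hasDerivAt hd (Continuous.intervalIntegrable (by fun_prop) _ _)]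

/-- Interval integrability from measurability + boundedness. -/
lemma II_of_bdd {f : ℝ → ℝ} (hf : Measurable f) (C : ℝ) (hC : ∀ x, |f x| ≤ C) (a b : ℝ) :
    IntervalIntegrable f volume a b := by
  rw [intervalIntegrable_iff]
  refine Integrable.mono' (g := fun _ => C) (integrableOn_const measure_Ioc_lt_top.ne)
    hf.aestronglyMeasurable (Filter.Eventually.of_forall fun x => hC x)



/-- Fubini on the triangle `{0 < y ≤ x ≤ 1}` for bounded measurable integrands. -/
lemma tri_swap (f : ℝ → ℝ → ℝ) (hmeas : Measurable (Function.uncurry f)) (C : ℝ)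
    (hbd : ∀ x y, |f x y| ≤ C) :
    ∫ x in (0:ℝ)..1, ∫ y in (0:ℝ)..x, f x y = ∫ y in (0:ℝ)..1, ∫ x in y..(1:ℝ), f x y := by
  set T : Set (ℝ × ℝ) := {p | p.2 ≤ p.1} with hT
  have hTmeas : MeasurableSet T := measurableSet_le measurable_snd measurable_fst
  set F : ℝ × ℝ → ℝ := T.indicator (Function.uncurry f) with hF
  have hFmeas : Measurable F := hmeas.indicator hTmeas
  have hFbd : ∀ p, |F p| ≤ |C| := by
    intro p
    by_cases hp : p ∈ T
    · rw [hF, indicator_of_mem hp]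
      exact le_trans (hbd p.1 p.2) (le_abs_self C)
    · rw [hF, indicator_of_notMem hp]; simp
  set ν : Measure ℝ := volume.restrict (Ioc (0:ℝ) 1) with hν
  haveI : IsFiniteMeasure ν := by
    constructor
    rw [hν, Measure.restrict_apply_univ]
    exact measure_Ioc_lt_top
  have hint : Integrable (Function.uncurry (fun x y => F (x, y))) (ν.prod ν) := by
    have : Function.uncurry (fun x y => F (x, y)) = F := rfl
    rw [this]
    exact Integrable.mono' (integrable_const |C|) hFmeas.aestronglyMeasurable
      (Filter.Eventually.of_forall hFbd)
  have key := MeasureTheory.integral_integral_swap hint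
  -- LHS conversion
  have hL : (∫ x in (0:ℝ)..1, ∫ y in (0:ℝ)..x, f x y) = ∫ x, ∫ y, F (x, y) ∂ν ∂ν := by
    rw [intervalIntegral.integral_of_le (by norm_num : (0:ℝ) ≤ 1), hν]
    refine setIntegral_congr_fun measurableSet_Ioc fun x hx => ?_
    beta_reduce
    rw [intervalIntegral.integral_of_le hx.1.le]
    have h1 : ∀ y, F (x, y) = (Iic x).indicator (fun y => f x y) y := by
      intro y
      simp [hF, hT, Set.indicator_apply, Function.uncurry, mem_setOf_eq]
    rw [show (fun y => F (x, y)) = fun y => (Iic x).indicator (fun y => f x y) y from funext h1]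
    rw [setIntegral_indicator measurableSet_Iic]
    have hset : Ioc (0:ℝ) 1 ∩ Iic x = Ioc 0 x := by
      ext z
      simp only [mem_Ioc, mem_inter_iff, mem_Iic]
      constructor
      · rintro ⟨⟨h1, h2⟩, h3⟩; exact ⟨h1, h3⟩
      · rintro ⟨h1, h2⟩; exact ⟨⟨h1, le_trans h2 hx.2⟩, h2⟩
    rw [hset]
  -- RHS conversion
  have hR : (∫ y in (0:ℝ)..1, ∫ x in y..(1:ℝ), f x y) = ∫ y, ∫ x, F (x, y) ∂ν ∂ν := by
    rw [intervalIntegral.integral_of_le (by norm_num : (0:ℝ) ≤ 1), hν]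
    refine setIntegral_congr_fun measurableSet_Ioc fun y hy => ?_
    beta_reduce
    rw [intervalIntegral.integral_of_le hy.2]
    have h1 : ∀ x, F (x, y) = (Ici y).indicator (fun x => f x y) x := by
      intro x
      simp [hF, hT, Set.indicator_apply, Function.uncurry, mem_setOf_eq]
    rw [show (fun x => F (x, y)) = fun x => (Ici y).indicator (fun x => f x y) x from funext h1]
    rw [setIntegral_indicator measurableSet_Ici, ← MeasureTheory.integral_Icc_eq_integral_Ioc]
    have hset : Ioc (0:ℝ) 1 ∩ Ici y = Icc y 1 := by
      ext z
      simp only [mem_Ioc, mem_inter_iff, mem_Ici, mem_Icc]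
      constructor
      · rintro ⟨⟨h1, h2⟩, h3⟩; exact ⟨h3, h2⟩
      · rintro ⟨h1, h2⟩; exact ⟨⟨lt_of_lt_of_le hy.1 h1, h2⟩, h1⟩
    rw [hset]
  rw [hL, hR, key]

-- assume previous: G₀ defs, II_of_bdd, integral_poly3
/-- Inner integral representation via primitives. -/
lemma inner_sq_repr (F : ℝ → ℝ) (hFm : Measurable F) (hbd : ∀ y, |F y| ≤ 1) (x : ℝ) :
    ∫ y in (0:ℝ)..x, (1 - F x + F y)^2
      = x*(1 - F x)^2 + 2*(1 - F x)*(∫ y in (0:ℝ)..x, F y) + ∫ y in (0:ℝ)..x, (F y)^2 := by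
  have hIF : IntervalIntegrable F volume 0 x := II_of_bdd hFm 1 hbd 0 x
  have hIF2 : IntervalIntegrable (fun y => (F y)^2) volume 0 x := by
    refine II_of_bdd (hFm.pow_const 2) 1 (fun y => ?_) 0 x
    rw [abs_pow]
    calc |F y|^2 ≤ 1^2 := pow_le_pow_left₀ (abs_nonneg _) (hbd y) 2
    _ = 1 := one_pow 2
  have h1 : (fun y => (1 - F x + F y)^2)
      = fun y => (1 - F x)^2 + ((2*(1 - F x))*F y + (F y)^2) := by
    funext y; ring
  rw [h1, intervalIntegral.integral_add intervalIntegrable_const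
        ((hIF.const_mul _).add hIF2),
      intervalIntegral.integral_add (hIF.const_mul _) hIF2,
      intervalIntegral.integral_const_mul, intervalIntegral.integral_const]
  simp only [smul_eq_mul]
  ring

lemma AG0_left {t : ℝ} (h : t ≤ 1/4) : (∫ y in (0:ℝ)..t, G₀ y) = 0 := by
  have hz : (∫ y in (0:ℝ)..t, G₀ y) = ∫ y in (0:ℝ)..t, (0:ℝ) := by
    refine intervalIntegral.integral_congr fun y hy => ?_
    have hy' : y ≤ 1/4 := by
      rcases le_total 0 t with h0 | h0
      · have := (uIcc_of_le h0 ▸ hy).2; linarith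
      · have := (uIcc_of_ge h0 ▸ hy).2; linarith
    simp [G0_left hy']
  rw [hz, intervalIntegral.integral_zero]

lemma AG0_mid {t : ℝ} (h1 : 1/4 ≤ t) (h2 : t ≤ 3/4) :
    (∫ y in (0:ℝ)..t, G₀ y) = t^2 - t/2 + 1/16 := by
  have hsplit := intervalIntegral.integral_add_adjacent_intervals
    (G0_cont.intervalIntegrable (μ := volume) 0 (1/4)) (G0_cont.intervalIntegrable (μ := volume) (1/4) t)
  have hA : (∫ y in (0:ℝ)..(1/4:ℝ), G₀ y) = 0 := AG0_left le_rfl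
  have hB : (∫ y in (1/4:ℝ)..t, G₀ y) = t^2 - t/2 + 1/16 := by
    have : (∫ y in (1/4:ℝ)..t, G₀ y) = ∫ y in (1/4:ℝ)..t, (-(1/2) + 2*y + 0*y^2 + 0*y^3) := by
      refine intervalIntegral.integral_congr fun y hy => ?_
      rw [uIcc_of_le h1] at hy
      rw [G0_mid (hy.1) (le_trans hy.2 h2)]; ring
    rw [this, integral_poly3]; ring
  rw [← hsplit, hA, hB]; ring

lemma AG0_right {t : ℝ} (h : 3/4 ≤ t) : (∫ y in (0:ℝ)..t, G₀ y) = t - 1/2 := by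
  have hsplit := intervalIntegral.integral_add_adjacent_intervals
    (G0_cont.intervalIntegrable (μ := volume) 0 (3/4)) (G0_cont.intervalIntegrable (μ := volume) (3/4) t)
  have hA : (∫ y in (0:ℝ)..(3/4:ℝ), G₀ y) = 1/4 := by
    rw [AG0_mid (by norm_num) le_rfl]; norm_num
  have hB : (∫ y in (3/4:ℝ)..t, G₀ y) = t - 3/4 := by
    have : (∫ y in (3/4:ℝ)..t, G₀ y) = ∫ y in (3/4:ℝ)..t, ((1:ℝ) + 0*y + 0*y^2 + 0*y^3) := by
      refine intervalIntegral.integral_congr fun y hy => ?_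
      rw [uIcc_of_le h] at hy
      rw [G0_right hy.1]; ring
    rw [this, integral_poly3]; ring
  rw [← hsplit, hA, hB]; ring

lemma BG0_left {t : ℝ} (h : t ≤ 1/4) : (∫ y in (0:ℝ)..t, (G₀ y)^2) = 0 := by
  have hz : (∫ y in (0:ℝ)..t, (G₀ y)^2) = ∫ y in (0:ℝ)..t, (0:ℝ) := by
    refine intervalIntegral.integral_congr fun y hy => ?_
    have hy' : y ≤ 1/4 := by
      rcases le_total 0 t with h0 | h0
      · have := (uIcc_of_le h0 ▸ hy).2; linarith
      · have := (uIcc_of_ge h0 ▸ hy).2; linarith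
    simp [G0_left hy']
  rw [hz, intervalIntegral.integral_zero]

lemma BG0_mid {t : ℝ} (h1 : 1/4 ≤ t) (h2 : t ≤ 3/4) :
    (∫ y in (0:ℝ)..t, (G₀ y)^2) = (2*t - 1/2)^3/6 := by
  have hG2 : Continuous (fun y => (G₀ y)^2) := G0_cont.pow 2
  have hsplit := intervalIntegral.integral_add_adjacent_intervals
    (hG2.intervalIntegrable (μ := volume) 0 (1/4)) (hG2.intervalIntegrable (μ := volume) (1/4) t)
  have hA : (∫ y in (0:ℝ)..(1/4:ℝ), (G₀ y)^2) = 0 := BG0_left le_rfl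
  have hB : (∫ y in (1/4:ℝ)..t, (G₀ y)^2) = (2*t - 1/2)^3/6 := by
    have : (∫ y in (1/4:ℝ)..t, (G₀ y)^2)
        = ∫ y in (1/4:ℝ)..t, ((1/4:ℝ) + (-2)*y + 4*y^2 + 0*y^3) := by
      refine intervalIntegral.integral_congr fun y hy => ?_
      rw [uIcc_of_le h1] at hy
      rw [G0_mid (hy.1) (le_trans hy.2 h2)]; ring
    rw [this, integral_poly3]; ring
  rw [← hsplit, hA, hB]; ring

lemma BG0_right {t : ℝ} (h : 3/4 ≤ t) : (∫ y in (0:ℝ)..t, (G₀ y)^2) = t - 7/12 := by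
  have hG2 : Continuous (fun y => (G₀ y)^2) := G0_cont.pow 2
  have hsplit := intervalIntegral.integral_add_adjacent_intervals
    (hG2.intervalIntegrable (μ := volume) 0 (3/4)) (hG2.intervalIntegrable (μ := volume) (3/4) t)
  have hA : (∫ y in (0:ℝ)..(3/4:ℝ), (G₀ y)^2) = 1/6 := by
    rw [BG0_mid (by norm_num) le_rfl]; norm_num
  have hB : (∫ y in (3/4:ℝ)..t, (G₀ y)^2) = t - 3/4 := by
    have : (∫ y in (3/4:ℝ)..t, (G₀ y)^2) = ∫ y in (3/4:ℝ)..t, ((1:ℝ) + 0*y + 0*y^2 + 0*y^3) := by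
      refine intervalIntegral.integral_congr fun y hy => ?_
      rw [uIcc_of_le h] at hy
      rw [G0_right hy.1]; ring
    rw [this, integral_poly3]; ring
  rw [← hsplit, hA, hB]; ring

/-- The value of the functional at `G₀`. -/
lemma K_eq : (∫ x in (0:ℝ)..1, ∫ y in (0:ℝ)..x, (1 - G₀ x + G₀ y)^2) = 5/24 := by
  have hbd : ∀ y, |G₀ y| ≤ 1 := fun y => abs_le.2 ⟨by linarith [G0_nonneg y], G0_le_one y⟩
  have hrepr : (fun x => ∫ y in (0:ℝ)..x, (1 - G₀ x + G₀ y)^2)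
      = fun x => x*(1 - G₀ x)^2 + 2*(1 - G₀ x)*(∫ y in (0:ℝ)..x, G₀ y)
          + ∫ y in (0:ℝ)..x, (G₀ y)^2 :=
    funext (inner_sq_repr G₀ G0_cont.measurable hbd)
  rw [hrepr]
  have hAcont : Continuous (fun x => ∫ y in (0:ℝ)..x, G₀ y) :=
    intervalIntegral.continuous_primitive (fun a b => G0_cont.intervalIntegrable a b) 0
  have hBcont : Continuous (fun x => ∫ y in (0:ℝ)..x, (G₀ y)^2) :=
    intervalIntegral.continuous_primitive
      (fun a b => (G0_cont.pow 2).intervalIntegrable a b) 0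
  have hcont : Continuous (fun x => x*(1 - G₀ x)^2 + 2*(1 - G₀ x)*(∫ y in (0:ℝ)..x, G₀ y)
      + ∫ y in (0:ℝ)..x, (G₀ y)^2) :=
    ((continuous_id.mul ((continuous_const.sub G0_cont).pow 2)).add
      ((continuous_const.mul (continuous_const.sub G0_cont)).mul hAcont)).add hBcont
  have hsplit := intervalIntegral.integral_add_adjacent_intervals
    (hcont.intervalIntegrable (μ := volume) 0 (1/4)) (hcont.intervalIntegrable (μ := volume) (1/4) (3/4))
  have hsplit2 := intervalIntegral.integral_add_adjacent_intervals
    ((hcont.intervalIntegrable (μ := volume) 0 (1/4)).trans (hcont.intervalIntegrable (μ := volume) (1/4) (3/4)))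
    (hcont.intervalIntegrable (μ := volume) (3/4) 1)
  rw [← hsplit2, ← hsplit]
  have hP1 : (∫ x in (0:ℝ)..(1/4:ℝ), (x*(1 - G₀ x)^2 + 2*(1 - G₀ x)*(∫ y in (0:ℝ)..x, G₀ y)
      + ∫ y in (0:ℝ)..x, (G₀ y)^2)) = 1/32 := by
    have : (∫ x in (0:ℝ)..(1/4:ℝ), (x*(1 - G₀ x)^2 + 2*(1 - G₀ x)*(∫ y in (0:ℝ)..x, G₀ y)
        + ∫ y in (0:ℝ)..x, (G₀ y)^2))
        = ∫ x in (0:ℝ)..(1/4:ℝ), ((0:ℝ) + 1*x + 0*x^2 + 0*x^3) := by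
      refine intervalIntegral.integral_congr fun x hx => ?_
      rw [uIcc_of_le (by norm_num : (0:ℝ) ≤ 1/4)] at hx
      rw [G0_left hx.2, AG0_left hx.2, BG0_left hx.2]; ring
    rw [this, integral_poly3]; norm_num
  have hP2 : (∫ x in (1/4:ℝ)..(3/4:ℝ), (x*(1 - G₀ x)^2 + 2*(1 - G₀ x)*(∫ y in (0:ℝ)..x, G₀ y)
      + ∫ y in (0:ℝ)..x, (G₀ y)^2)) = 5/48 := by
    have : (∫ x in (1/4:ℝ)..(3/4:ℝ), (x*(1 - G₀ x)^2 + 2*(1 - G₀ x)*(∫ y in (0:ℝ)..x, G₀ y)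
        + ∫ y in (0:ℝ)..x, (G₀ y)^2))
        = ∫ x in (1/4:ℝ)..(3/4:ℝ), ((1/6:ℝ) + (3/4)*x + (-2)*x^2 + (4/3)*x^3) := by
      refine intervalIntegral.integral_congr fun x hx => ?_
      rw [uIcc_of_le (by norm_num : (1/4:ℝ) ≤ 3/4)] at hx
      rw [G0_mid hx.1 hx.2, AG0_mid hx.1 hx.2, BG0_mid hx.1 hx.2]; ring
    rw [this, integral_poly3]; norm_num
  have hP3 : (∫ x in (3/4:ℝ)..(1:ℝ), (x*(1 - G₀ x)^2 + 2*(1 - G₀ x)*(∫ y in (0:ℝ)..x, G₀ y)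
      + ∫ y in (0:ℝ)..x, (G₀ y)^2)) = 7/96 := by
    have : (∫ x in (3/4:ℝ)..(1:ℝ), (x*(1 - G₀ x)^2 + 2*(1 - G₀ x)*(∫ y in (0:ℝ)..x, G₀ y)
        + ∫ y in (0:ℝ)..x, (G₀ y)^2))
        = ∫ x in (3/4:ℝ)..(1:ℝ), ((-7/12:ℝ) + 1*x + 0*x^2 + 0*x^3) := by
      refine intervalIntegral.integral_congr fun x hx => ?_
      rw [uIcc_of_le (by norm_num : (3/4:ℝ) ≤ 1)] at hx
      rw [G0_right hx.1, AG0_right hx.1, BG0_right hx.1]; ring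
    rw [this, integral_poly3]; norm_num
  rw [hP1, hP2, hP3]; norm_num


lemma H_meas (G : ℝ → ℝ) (hGm : Measurable G) : Measurable (fun t => G t - G₀ t) :=
  hGm.sub G0_cont.measurable

lemma H_bdd (G : ℝ → ℝ) (hG0 : ∀ x, 0 ≤ G x) (hG1 : ∀ x, G x ≤ 1) : ∀ t, |G t - G₀ t| ≤ 1 := by
  intro t
  rw [abs_le]
  constructor
  · have := hG0 t; have := G0_le_one t; linarith
  · have := hG1 t; have := G0_nonneg t; linarith

lemma II_H (G : ℝ → ℝ) (hGm : Measurable G) (hG0 : ∀ x, 0 ≤ G x) (hG1 : ∀ x, G x ≤ 1) (a b : ℝ) : IntervalIntegrable (fun t => G t - G₀ t) volume a b :=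
  II_of_bdd (H_meas G hGm) 1 (H_bdd G hG0 hG1) a b

lemma II_G0H (G : ℝ → ℝ) (hGm : Measurable G) (hG0 : ∀ x, 0 ≤ G x) (hG1 : ∀ x, G x ≤ 1) (a b : ℝ) : IntervalIntegrable (fun t => G₀ t * (G t - G₀ t)) volume a b := by
  refine II_of_bdd (G0_cont.measurable.mul (H_meas G hGm)) 1 (fun t => ?_) a b
  rw [Pi.mul_apply, abs_mul]
  calc |G₀ t| * |G t - G₀ t| ≤ 1 * 1 := by
        apply mul_le_mul _ (H_bdd G hG0 hG1 t) (abs_nonneg _) zero_le_one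
        rw [abs_le]; exact ⟨by linarith [G0_nonneg t], G0_le_one t⟩
  _ = 1 := by norm_num

/-- `∫₀ˣ (1 - G₀ x + G₀ y) dy = x (1 - G₀ x) + A x`. -/
lemma psi_repr (x : ℝ) :
    (∫ y in (0:ℝ)..x, (1 - G₀ x + G₀ y)) = x * (1 - G₀ x) + ∫ y in (0:ℝ)..x, G₀ y := by
  rw [intervalIntegral.integral_add intervalIntegrable_const
      (G0_cont.intervalIntegrable (μ := volume) 0 x), intervalIntegral.integral_const]
  simp only [smul_eq_mul]; ring

/-- representation of `∫₀ˣ a(x,y) H(y) dy`. -/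
lemma T1_repr (G : ℝ → ℝ) (hGm : Measurable G) (hG0 : ∀ x, 0 ≤ G x) (hG1 : ∀ x, G x ≤ 1) (x : ℝ) :
    (∫ y in (0:ℝ)..x, ((1 - G₀ x + G₀ y) * (G y - G₀ y)))
      = (1 - G₀ x) * (∫ y in (0:ℝ)..x, (G y - G₀ y))
        + ∫ y in (0:ℝ)..x, G₀ y * (G y - G₀ y) := by
  have h1 : (fun y => (1 - G₀ x + G₀ y) * (G y - G₀ y))
      = fun y => (1 - G₀ x) * (G y - G₀ y) + G₀ y * (G y - G₀ y) := by
    funext y; ring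
  rw [h1, intervalIntegral.integral_add ((II_H G hGm hG0 hG1 0 x).const_mul _)
      (II_G0H G hGm hG0 hG1 0 x), intervalIntegral.integral_const_mul]

/-- representation of the cross inner integral. -/
lemma cross_repr (G : ℝ → ℝ) (hGm : Measurable G) (hG0 : ∀ x, 0 ≤ G x) (hG1 : ∀ x, G x ≤ 1) (x : ℝ) :
    (∫ y in (0:ℝ)..x, (2 * ((1 - G₀ x + G₀ y) * ((G y - G₀ y) - (G x - G₀ x)))))
      = 2 * (∫ y in (0:ℝ)..x, ((1 - G₀ x + G₀ y) * (G y - G₀ y)))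
        - 2 * ((G x - G₀ x) * (x * (1 - G₀ x) + ∫ y in (0:ℝ)..x, G₀ y)) := by
  have hIa : IntervalIntegrable (fun y => 1 - G₀ x + G₀ y) volume 0 x :=
    (continuous_const.add G0_cont).intervalIntegrable (μ := volume) 0 x
  have hIaH : IntervalIntegrable (fun y => (1 - G₀ x + G₀ y) * (G y - G₀ y)) volume 0 x := by
    refine II_of_bdd ((continuous_const.add G0_cont).measurable.mul (H_meas G hGm)) 2
      (fun y => ?_) 0 x
    rw [Pi.mul_apply, abs_mul]
    calc |1 - G₀ x + G₀ y| * |G y - G₀ y| ≤ 2 * 1 := by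
          apply mul_le_mul _ (H_bdd G hG0 hG1 y) (abs_nonneg _) (by norm_num)
          rw [abs_le]
          constructor
          · have := G0_le_one x; have := G0_nonneg y; linarith
          · have := G0_nonneg x; have := G0_le_one y; linarith
    _ = 2 := by norm_num
  have h1 : (fun y => 2 * ((1 - G₀ x + G₀ y) * ((G y - G₀ y) - (G x - G₀ x))))
      = fun y => 2 * ((1 - G₀ x + G₀ y) * (G y - G₀ y))
          - (2 * (G x - G₀ x)) * (1 - G₀ x + G₀ y) := by
    funext y; ring
  rw [h1, intervalIntegral.integral_sub (hIaH.const_mul 2) (hIa.const_mul _),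
      intervalIntegral.integral_const_mul, intervalIntegral.integral_const_mul,
      psi_repr]
  ring

/-- representation of the quadratic inner integral. -/
lemma q_repr (G : ℝ → ℝ) (hGm : Measurable G) (hG0 : ∀ x, 0 ≤ G x) (hG1 : ∀ x, G x ≤ 1) (x : ℝ) :
    (∫ y in (0:ℝ)..x, ((G y - G₀ y) - (G x - G₀ x))^2)
      = (∫ y in (0:ℝ)..x, (G y - G₀ y)^2)
        - 2 * (G x - G₀ x) * (∫ y in (0:ℝ)..x, (G y - G₀ y))
        + x * (G x - G₀ x)^2 := by
  have hH2 : IntervalIntegrable (fun y => (G y - G₀ y)^2) volume 0 x := by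
    refine II_of_bdd ((H_meas G hGm).pow_const 2) 1 (fun y => ?_) 0 x
    rw [abs_pow]
    calc |G y - G₀ y|^2 ≤ 1^2 := by
          apply pow_le_pow_left₀ (abs_nonneg _) (H_bdd G hG0 hG1 y)
    _ = 1 := one_pow 2
  have h1 : (fun y => ((G y - G₀ y) - (G x - G₀ x))^2)
      = fun y => (G y - G₀ y)^2 - (2 * (G x - G₀ x)) * (G y - G₀ y) + (G x - G₀ x)^2 := by
    funext y; ring
  rw [h1, intervalIntegral.integral_add
        (hH2.sub ((II_H G hGm hG0 hG1 0 x).const_mul _)) intervalIntegrable_const,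
      intervalIntegral.integral_sub hH2 ((II_H G hGm hG0 hG1 0 x).const_mul _),
      intervalIntegral.integral_const_mul, intervalIntegral.integral_const]
  simp only [smul_eq_mul]; ring

/-- inner decomposition of the functional. -/
lemma inner_decomp (G : ℝ → ℝ) (hGm : Measurable G) (hG0 : ∀ x, 0 ≤ G x) (hG1 : ∀ x, G x ≤ 1) (x : ℝ) :
    (∫ y in (0:ℝ)..x, (1 - G x + G y)^2)
      = (∫ y in (0:ℝ)..x, (1 - G₀ x + G₀ y)^2)
        + ((∫ y in (0:ℝ)..x, (2 * ((1 - G₀ x + G₀ y) * ((G y - G₀ y) - (G x - G₀ x)))))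
        + ∫ y in (0:ℝ)..x, ((G y - G₀ y) - (G x - G₀ x))^2) := by
  have hIa2 : IntervalIntegrable (fun y => (1 - G₀ x + G₀ y)^2) volume 0 x :=
    ((continuous_const.add G0_cont).pow 2).intervalIntegrable (μ := volume) 0 x
  have habd : ∀ y, |1 - G₀ x + G₀ y| ≤ 2 := by
    intro y
    rw [abs_le]
    constructor
    · have := G0_le_one x; have := G0_nonneg y; linarith
    · have := G0_nonneg x; have := G0_le_one y; linarith
  have hhbd : ∀ y, |(G y - G₀ y) - (G x - G₀ x)| ≤ 2 := by
    intro y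
    calc |(G y - G₀ y) - (G x - G₀ x)| ≤ |G y - G₀ y| + |G x - G₀ x| := abs_sub _ _
    _ ≤ 1 + 1 := add_le_add (H_bdd G hG0 hG1 y) (H_bdd G hG0 hG1 x)
    _ = 2 := by norm_num
  have hmeas_h : Measurable (fun y => (G y - G₀ y) - (G x - G₀ x)) :=
    (H_meas G hGm).sub measurable_const
  have hIc : IntervalIntegrable
      (fun y => 2 * ((1 - G₀ x + G₀ y) * ((G y - G₀ y) - (G x - G₀ x)))) volume 0 x := by
    refine II_of_bdd (((continuous_const.add G0_cont).measurable.mul hmeas_h).const_mul 2) 8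
      (fun y => ?_) 0 x
    rw [abs_mul, Pi.mul_apply, abs_mul]
    calc |(2:ℝ)| * (|1 - G₀ x + G₀ y| * |(G y - G₀ y) - (G x - G₀ x)|)
        ≤ 2 * (2 * 2) := by
          apply mul_le_mul (le_of_eq (by norm_num)) _ (by positivity) (by norm_num)
          exact mul_le_mul (habd y) (hhbd y) (abs_nonneg _) (by norm_num)
    _ = 8 := by norm_num
  have hIq : IntervalIntegrable
      (fun y => ((G y - G₀ y) - (G x - G₀ x))^2) volume 0 x := by
    refine II_of_bdd (hmeas_h.pow_const 2) 4 (fun y => ?_) 0 x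
    rw [abs_pow]
    calc |(G y - G₀ y) - (G x - G₀ x)|^2 ≤ 2^2 := pow_le_pow_left₀ (abs_nonneg _) (hhbd y) 2
    _ = 4 := by norm_num
  have h1 : (fun y => (1 - G x + G y)^2)
      = fun y => (1 - G₀ x + G₀ y)^2
          + (2 * ((1 - G₀ x + G₀ y) * ((G y - G₀ y) - (G x - G₀ x)))
            + ((G y - G₀ y) - (G x - G₀ x))^2) := by
    funext y; ring
  rw [h1, intervalIntegral.integral_add hIa2 (hIc.add hIq),
      intervalIntegral.integral_add hIc hIq]

lemma II_of_bdd_on {f : ℝ → ℝ} (hf : Measurable f) (C : ℝ) {a b : ℝ}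
    (hC : ∀ x ∈ Set.uIoc a b, |f x| ≤ C) : IntervalIntegrable f volume a b := by
  rw [intervalIntegrable_iff]
  refine Integrable.mono' (g := fun _ => C) (integrableOn_const measure_Ioc_lt_top.ne)
    hf.aestronglyMeasurable ?_
  exact (ae_restrict_iff' measurableSet_uIoc).2 (Filter.Eventually.of_forall hC)

lemma AG0_bdd : ∀ x ∈ Set.uIoc (0:ℝ) 1, |∫ y in (0:ℝ)..x, G₀ y| ≤ 1 := by
  intro x hx
  rw [Set.uIoc_of_le (by norm_num : (0:ℝ) ≤ 1)] at hx
  have := intervalIntegral.norm_integral_le_of_norm_le_const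
    (C := 1) (f := G₀) (a := 0) (b := x) (fun y _ => by
      rw [Real.norm_eq_abs, abs_le]; exact ⟨by linarith [G0_nonneg y], G0_le_one y⟩)
  rw [Real.norm_eq_abs] at this
  calc |∫ y in (0:ℝ)..x, G₀ y| ≤ 1 * |x - 0| := this
  _ ≤ 1 := by rw [one_mul, abs_le]; constructor <;> [linarith [hx.1.le]; linarith [hx.2]]

lemma SH_bdd (G : ℝ → ℝ) (hG0 : ∀ x, 0 ≤ G x) (hG1 : ∀ x, G x ≤ 1) :
    ∀ x ∈ Set.uIoc (0:ℝ) 1, |∫ y in (0:ℝ)..x, (G y - G₀ y)| ≤ 1 := by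
  intro x hx
  rw [Set.uIoc_of_le (by norm_num : (0:ℝ) ≤ 1)] at hx
  have := intervalIntegral.norm_integral_le_of_norm_le_const
    (C := 1) (f := fun y => G y - G₀ y) (a := 0) (b := x) (fun y _ => by
      rw [Real.norm_eq_abs]; exact H_bdd G hG0 hG1 y)
  rw [Real.norm_eq_abs] at this
  calc |∫ y in (0:ℝ)..x, (G y - G₀ y)| ≤ 1 * |x - 0| := this
  _ ≤ 1 := by rw [one_mul, abs_le]; constructor <;> [linarith [hx.1.le]; linarith [hx.2]]

lemma hpsibd_aux (G : ℝ → ℝ) (hG0 : ∀ x, 0 ≤ G x) (hG1 : ∀ x, G x ≤ 1) :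
    ∀ x ∈ Set.uIoc (0:ℝ) 1,
      |(G x - G₀ x) * (x * (1 - G₀ x) + ∫ y in (0:ℝ)..x, G₀ y)| ≤ 2 := by
    intro x hx
    have hxm := hx
    rw [Set.uIoc_of_le (by norm_num : (0:ℝ) ≤ 1)] at hxm
    rw [abs_mul]
    have h2 : |x * (1 - G₀ x) + ∫ y in (0:ℝ)..x, G₀ y| ≤ 2 := by
      calc |x * (1 - G₀ x) + ∫ y in (0:ℝ)..x, G₀ y|
          ≤ |x * (1 - G₀ x)| + |∫ y in (0:ℝ)..x, G₀ y| := abs_add_le _ _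
      _ ≤ 1 + 1 := by
          refine add_le_add ?_ (AG0_bdd x hx)
          rw [abs_mul]
          calc |x| * |1 - G₀ x| ≤ 1 * 1 := by
                refine mul_le_mul ?_ ?_ (abs_nonneg _) zero_le_one
                · rw [abs_le]; exact ⟨by linarith [hxm.1.le], hxm.2⟩
                · rw [abs_le]; exact ⟨by linarith [G0_le_one x], by linarith [G0_nonneg x]⟩
          _ = 1 := by norm_num
      _ = 2 := by norm_num
    calc |G x - G₀ x| * |x * (1 - G₀ x) + ∫ y in (0:ℝ)..x, G₀ y| ≤ 1 * 2 :=
          mul_le_mul (H_bdd G hG0 hG1 x) h2 (abs_nonneg _) zero_le_one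
    _ = 2 := by norm_num

/-- Evaluation of the cross term. -/
lemma cross_integral (G : ℝ → ℝ) (hGm : Measurable G) (hG0 : ∀ x, 0 ≤ G x)
    (hG1 : ∀ x, G x ≤ 1) :
    (∫ x in (0:ℝ)..1, ∫ y in (0:ℝ)..x,
        (2 * ((1 - G₀ x + G₀ y) * ((G y - G₀ y) - (G x - G₀ x)))))
      = 2 * ∫ t in (0:ℝ)..1, ((G t - G₀ t) * (G₀ t - 2*t + 1/2)) := by
  have hSHcont : Continuous (fun x => ∫ y in (0:ℝ)..x, (G y - G₀ y)) :=
    intervalIntegral.continuous_primitive (II_H G hGm hG0 hG1) 0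
  have hSG0Hcont : Continuous (fun x => ∫ y in (0:ℝ)..x, G₀ y * (G y - G₀ y)) :=
    intervalIntegral.continuous_primitive (II_G0H G hGm hG0 hG1) 0
  have hAcont : Continuous (fun x => ∫ y in (0:ℝ)..x, G₀ y) :=
    intervalIntegral.continuous_primitive (fun a b => G0_cont.intervalIntegrable a b) 0
  -- T1i is continuous
  have hT1eq : (fun x => ∫ y in (0:ℝ)..x, ((1 - G₀ x + G₀ y) * (G y - G₀ y)))
      = fun x => (1 - G₀ x) * (∫ y in (0:ℝ)..x, (G y - G₀ y))
          + ∫ y in (0:ℝ)..x, G₀ y * (G y - G₀ y) :=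
    funext (T1_repr G hGm hG0 hG1)
  have hT1cont : Continuous (fun x => ∫ y in (0:ℝ)..x, ((1 - G₀ x + G₀ y) * (G y - G₀ y))) := by
    rw [hT1eq]
    exact ((continuous_const.sub G0_cont).mul hSHcont).add hSG0Hcont
  have hIT1 : IntervalIntegrable
      (fun x => ∫ y in (0:ℝ)..x, ((1 - G₀ x + G₀ y) * (G y - G₀ y))) volume 0 1 :=
    hT1cont.intervalIntegrable (μ := volume) 0 1
  -- H x * ψ x term
  have hpsibd := hpsibd_aux G hG0 hG1
  have hIHpsi : IntervalIntegrable
      (fun x => (G x - G₀ x) * (x * (1 - G₀ x) + ∫ y in (0:ℝ)..x, G₀ y)) volume 0 1 :=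
    II_of_bdd_on ((H_meas G hGm).mul
      ((measurable_id.mul (continuous_const.sub G0_cont).measurable).add hAcont.measurable))
      2 hpsibd
  -- rewrite cross inner integral via cross_repr
  have h1 : (fun x => ∫ y in (0:ℝ)..x,
        (2 * ((1 - G₀ x + G₀ y) * ((G y - G₀ y) - (G x - G₀ x)))))
      = fun x => 2 * (∫ y in (0:ℝ)..x, ((1 - G₀ x + G₀ y) * (G y - G₀ y)))
          - 2 * ((G x - G₀ x) * (x * (1 - G₀ x) + ∫ y in (0:ℝ)..x, G₀ y)) :=
    funext (cross_repr G hGm hG0 hG1)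
  rw [h1, intervalIntegral.integral_sub (hIT1.const_mul 2) (hIHpsi.const_mul 2),
      intervalIntegral.integral_const_mul, intervalIntegral.integral_const_mul]
  -- apply triangle swap to the first term
  have hswap := tri_swap (fun x y => (1 - G₀ x + G₀ y) * (G y - G₀ y))
    (by
      have hc : Measurable (fun p : ℝ × ℝ => 1 - G₀ p.1 + G₀ p.2) :=
        ((continuous_const.sub (G0_cont.comp continuous_fst)).add
          (G0_cont.comp continuous_snd)).measurable
      exact hc.mul ((H_meas G hGm).comp measurable_snd))
    2
    (fun x y => by
      rw [abs_mul]
      calc |1 - G₀ x + G₀ y| * |G y - G₀ y| ≤ 2 * 1 := by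
            refine mul_le_mul ?_ (H_bdd G hG0 hG1 y) (abs_nonneg _) (by norm_num)
            rw [abs_le]
            exact ⟨by linarith [G0_le_one x, G0_nonneg y],
              by linarith [G0_nonneg x, G0_le_one y]⟩
      _ = 2 := by norm_num)
  rw [hswap]
  -- compute the inner integral of the swapped form
  have hinner : ∀ y : ℝ, (∫ x in y..(1:ℝ), ((1 - G₀ x + G₀ y) * (G y - G₀ y)))
      = ((1 - y) * (1 + G₀ y) - (1/2 - ∫ s in (0:ℝ)..y, G₀ s)) * (G y - G₀ y) := by
    intro y
    rw [intervalIntegral.integral_mul_const]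
    congr 1
    have hadj : (∫ s in (0:ℝ)..y, G₀ s) + (∫ s in y..(1:ℝ), G₀ s) = ∫ s in (0:ℝ)..1, G₀ s :=
      intervalIntegral.integral_add_adjacent_intervals
        (G0_cont.intervalIntegrable (μ := volume) 0 y)
        (G0_cont.intervalIntegrable (μ := volume) y 1)
    have hA1 : (∫ s in (0:ℝ)..1, G₀ s) = 1/2 := by
      rw [AG0_right (by norm_num : (3:ℝ)/4 ≤ 1)]; norm_num
    have h2 : (fun x => 1 - G₀ x + G₀ y) = fun x => (1 + G₀ y) - G₀ x := by
      funext x; ring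
    rw [h2, intervalIntegral.integral_sub intervalIntegrable_const
        (G0_cont.intervalIntegrable (μ := volume) y 1), intervalIntegral.integral_const]
    rw [hA1] at hadj
    simp only [smul_eq_mul]
    have : (∫ s in y..(1:ℝ), G₀ s) = 1/2 - ∫ s in (0:ℝ)..y, G₀ s := by linarith
    rw [this]
  rw [funext hinner]
  -- combine the two integrals
  have hIchiH : IntervalIntegrable
      (fun y => ((1 - y) * (1 + G₀ y) - (1/2 - ∫ s in (0:ℝ)..y, G₀ s)) * (G y - G₀ y))
      volume 0 1 := by
    refine II_of_bdd_on (((((continuous_const.sub continuous_id).mul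
        (continuous_const.add G0_cont)).sub (continuous_const.sub hAcont)).measurable).mul
        (H_meas G hGm)) 6 (fun y hy => ?_)
    have hym := hy
    rw [Set.uIoc_of_le (by norm_num : (0:ℝ) ≤ 1)] at hym
    rw [Pi.mul_apply, abs_mul]
    have hb : |(1 - y) * (1 + G₀ y) - (1/2 - ∫ s in (0:ℝ)..y, G₀ s)| ≤ 6 := by
      have h1 : |(1 - y) * (1 + G₀ y)| ≤ 2 := by
        rw [abs_mul]
        calc |1 - y| * |1 + G₀ y| ≤ 1 * 2 := by
              refine mul_le_mul ?_ ?_ (abs_nonneg _) zero_le_one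
              · rw [abs_le]; exact ⟨by linarith [hym.2], by linarith [hym.1.le]⟩
              · rw [abs_le]; exact ⟨by linarith [G0_nonneg y], by linarith [G0_le_one y]⟩
        _ = 2 := by norm_num
      have h2 : |1/2 - ∫ s in (0:ℝ)..y, G₀ s| ≤ 2 := by
        calc |1/2 - ∫ s in (0:ℝ)..y, G₀ s| ≤ |(1:ℝ)/2| + |∫ s in (0:ℝ)..y, G₀ s| :=
              abs_sub _ _
        _ ≤ 1 + 1 := add_le_add (by rw [abs_le]; constructor <;> norm_num) (AG0_bdd y hy)
        _ = 2 := by norm_num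
      calc |(1 - y) * (1 + G₀ y) - (1/2 - ∫ s in (0:ℝ)..y, G₀ s)|
          ≤ |(1 - y) * (1 + G₀ y)| + |1/2 - ∫ s in (0:ℝ)..y, G₀ s| := abs_sub _ _
      _ ≤ 2 + 2 := add_le_add h1 h2
      _ ≤ 6 := by norm_num
    calc |(1 - y) * (1 + G₀ y) - (1/2 - ∫ s in (0:ℝ)..y, G₀ s)| * |G y - G₀ y|
        ≤ 6 * 1 := mul_le_mul hb (H_bdd G hG0 hG1 y) (abs_nonneg _) (by norm_num)
    _ = 6 := by norm_num
  rw [show (2:ℝ) * (∫ y in (0:ℝ)..1,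
        ((1 - y) * (1 + G₀ y) - (1/2 - ∫ s in (0:ℝ)..y, G₀ s)) * (G y - G₀ y))
      - 2 * ∫ x in (0:ℝ)..1, ((G x - G₀ x) * (x * (1 - G₀ x) + ∫ y in (0:ℝ)..x, G₀ y))
      = 2 * ((∫ y in (0:ℝ)..1,
          ((1 - y) * (1 + G₀ y) - (1/2 - ∫ s in (0:ℝ)..y, G₀ s)) * (G y - G₀ y))
        - ∫ x in (0:ℝ)..1, ((G x - G₀ x) * (x * (1 - G₀ x) + ∫ y in (0:ℝ)..x, G₀ y)))
      from by ring]
  congr 1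
  rw [← intervalIntegral.integral_sub hIchiH hIHpsi]
  exact intervalIntegral.integral_congr fun t ht => by ring
/-- An integral of a nonnegative function bounded below on a subinterval is positive. -/
lemma integral_pos_on (f : ℝ → ℝ) (hf : IntervalIntegrable f volume 0 1)
    (hnn : ∀ t ∈ Icc (0:ℝ) 1, 0 ≤ f t) {u v ε : ℝ} (h0u : 0 ≤ u) (huv : u < v) (hv1 : v ≤ 1)
    (hε : 0 < ε) (hlb : ∀ t ∈ Icc u v, ε ≤ f t) : 0 < ∫ t in (0:ℝ)..1, f t := by
  have hsub : ∀ c d : ℝ, 0 ≤ c → c ≤ d → d ≤ 1 → IntervalIntegrable f volume c d := by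
    intro c d hc hcd hd1
    refine hf.mono_set ?_
    rw [uIcc_of_le hcd, uIcc_of_le (by norm_num : (0:ℝ) ≤ 1)]
    exact Icc_subset_Icc hc hd1
  have h1 : IntervalIntegrable f volume 0 u := hsub 0 u le_rfl h0u (by linarith)
  have h2 : IntervalIntegrable f volume u v := hsub u v h0u huv.le hv1
  have h3 : IntervalIntegrable f volume v 1 := hsub v 1 (by linarith) hv1 le_rfl
  have e1 := intervalIntegral.integral_add_adjacent_intervals h1 h2
  have e2 := intervalIntegral.integral_add_adjacent_intervals (h1.trans h2) h3
  have hI1 : 0 ≤ ∫ t in (0:ℝ)..u, f t :=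
    intervalIntegral.integral_nonneg h0u (fun t ht => hnn t ⟨ht.1, by linarith [ht.2]⟩)
  have hI3 : 0 ≤ ∫ t in v..(1:ℝ), f t :=
    intervalIntegral.integral_nonneg hv1 (fun t ht => hnn t ⟨by linarith [ht.1], ht.2⟩)
  have hI2 : ε * (v - u) ≤ ∫ t in u..v, f t := by
    have := intervalIntegral.integral_mono_on (f := fun _ => ε) (g := f) huv.le
      intervalIntegrable_const h2 hlb
    rw [intervalIntegral.integral_const, smul_eq_mul] at this
    linarith
  have hpos : 0 < ε * (v - u) := mul_pos hε (by linarith)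
  linarith

/-- Pointwise nonnegativity of the cross-term integrand. -/
lemma Hphi_nonneg (G : ℝ → ℝ) (hG0 : ∀ x, 0 ≤ G x) (hG1 : ∀ x, G x ≤ 1) :
    ∀ t ∈ Icc (0:ℝ) 1, 0 ≤ (G t - G₀ t) * (G₀ t - 2*t + 1/2) := by
  intro t ht
  rcases le_or_gt t (1/4) with h | h
  · rw [G0_left h]
    have : 0 ≤ G t := hG0 t
    nlinarith
  · rcases le_or_gt t (3/4) with h2 | h2
    · rw [G0_mid h.le h2]
      have : (2*t - 1/2) - 2*t + 1/2 = 0 := by ring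
      rw [show G t - (2*t - 1/2) = G t - (2*t - 1/2) from rfl]
      nlinarith
    · rw [G0_right h2.le]
      have h3 : G t - 1 ≤ 0 := by linarith [hG1 t]
      have h4 : 1 - 2*t + 1/2 ≤ 0 := by linarith
      nlinarith

lemma II_qInner (G : ℝ → ℝ) (hGm : Measurable G) (hG0 : ∀ x, 0 ≤ G x) (hG1 : ∀ x, G x ≤ 1) :
    IntervalIntegrable
      (fun x => ∫ y in (0:ℝ)..x, ((G y - G₀ y) - (G x - G₀ x))^2) volume 0 1 := by
  have hSHcont : Continuous (fun x => ∫ y in (0:ℝ)..x, (G y - G₀ y)) :=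
    intervalIntegral.continuous_primitive (II_H G hGm hG0 hG1) 0
  have : (fun x => ∫ y in (0:ℝ)..x, ((G y - G₀ y) - (G x - G₀ x))^2)
      = fun x => (∫ y in (0:ℝ)..x, (G y - G₀ y)^2)
          - 2 * (G x - G₀ x) * (∫ y in (0:ℝ)..x, (G y - G₀ y))
          + x * (G x - G₀ x)^2 :=
    funext (q_repr G hGm hG0 hG1)
  rw [this]
  have hSH2cont : Continuous (fun x => ∫ y in (0:ℝ)..x, (G y - G₀ y)^2) := by
    refine intervalIntegral.continuous_primitive (fun a b => ?_) 0
    refine II_of_bdd ((H_meas G hGm).pow_const 2) 1 (fun y => ?_) a b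
    rw [abs_pow]
    calc |G y - G₀ y|^2 ≤ 1^2 := pow_le_pow_left₀ (abs_nonneg _) (H_bdd G hG0 hG1 y) 2
    _ = 1 := one_pow 2
  refine II_of_bdd_on (((hSH2cont.measurable).sub
      ((((H_meas G hGm).const_mul 2).mul hSHcont.measurable))).add
      (measurable_id'.mul ((H_meas G hGm).pow_const 2))) 4 ?_
  intro x hx
  show |(∫ y in (0:ℝ)..x, (G y - G₀ y)^2) - 2 * (G x - G₀ x) * (∫ y in (0:ℝ)..x, (G y - G₀ y)) + x * (G x - G₀ x)^2| ≤ 4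
  have hxm := hx
  rw [Set.uIoc_of_le (by norm_num : (0:ℝ) ≤ 1)] at hxm
  have b1 : |∫ y in (0:ℝ)..x, (G y - G₀ y)^2| ≤ 1 := by
    have := intervalIntegral.norm_integral_le_of_norm_le_const
      (C := 1) (f := fun y => (G y - G₀ y)^2) (a := 0) (b := x) (fun y _ => by
        rw [Real.norm_eq_abs, abs_pow]
        calc |G y - G₀ y|^2 ≤ 1^2 := pow_le_pow_left₀ (abs_nonneg _) (H_bdd G hG0 hG1 y) 2
        _ = 1 := one_pow 2)
    rw [Real.norm_eq_abs] at this
    calc |∫ y in (0:ℝ)..x, (G y - G₀ y)^2| ≤ 1 * |x - 0| := this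
    _ ≤ 1 := by rw [one_mul, abs_le]; exact ⟨by linarith [hxm.1.le], by linarith [hxm.2]⟩
  have b2 : |2 * (G x - G₀ x) * (∫ y in (0:ℝ)..x, (G y - G₀ y))| ≤ 2 := by
    have hH := H_bdd G hG0 hG1 x
    have hSH := SH_bdd G hG0 hG1 x hx
    rw [abs_mul, abs_mul]
    have h2 : |(2:ℝ)| = 2 := by norm_num
    rw [h2]
    nlinarith [abs_nonneg (G x - G₀ x), abs_nonneg (∫ y in (0:ℝ)..x, (G y - G₀ y))]
  have b3 : |x * (G x - G₀ x)^2| ≤ 1 := by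
    have hH := H_bdd G hG0 hG1 x
    rw [abs_mul, abs_pow]
    have hx1 : |x| ≤ 1 := abs_le.2 ⟨by linarith [hxm.1.le], hxm.2⟩
    calc |x| * |G x - G₀ x|^2 ≤ 1 * 1 := by
          refine mul_le_mul hx1 ?_ (by positivity) (by norm_num)
          nlinarith [abs_nonneg (G x - G₀ x)]
    _ = 1 := by norm_num
  rw [abs_le] at b1 b2 b3 ⊢
  constructor <;> [linarith [b1.1, b2.2, b3.1]; linarith [b1.2, b2.1, b3.2]]

/-- Decomposition of the functional. -/
lemma J_decomp (G : ℝ → ℝ) (hGm : Measurable G) (hG0 : ∀ x, 0 ≤ G x) (hG1 : ∀ x, G x ≤ 1) :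
    (∫ x in (0:ℝ)..1, ∫ y in (0:ℝ)..x, (1 - G x + G y)^2)
      = 5/24 + 2 * (∫ t in (0:ℝ)..1, ((G t - G₀ t) * (G₀ t - 2*t + 1/2)))
        + ∫ x in (0:ℝ)..1, ∫ y in (0:ℝ)..x, ((G y - G₀ y) - (G x - G₀ x))^2 := by
  have hAcont : Continuous (fun x => ∫ y in (0:ℝ)..x, G₀ y) :=
    intervalIntegral.continuous_primitive (fun a b => G0_cont.intervalIntegrable a b) 0
  have hSHcont : Continuous (fun x => ∫ y in (0:ℝ)..x, (G y - G₀ y)) :=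
    intervalIntegral.continuous_primitive (II_H G hGm hG0 hG1) 0
  have hSG0Hcont : Continuous (fun x => ∫ y in (0:ℝ)..x, G₀ y * (G y - G₀ y)) :=
    intervalIntegral.continuous_primitive (II_G0H G hGm hG0 hG1) 0
  have hbd0 : ∀ y, |G₀ y| ≤ 1 := fun y => abs_le.2 ⟨by linarith [G0_nonneg y], G0_le_one y⟩
  -- interval integrability of the three outer integrands on [0,1]
  have hI0 : IntervalIntegrable
      (fun x => ∫ y in (0:ℝ)..x, (1 - G₀ x + G₀ y)^2) volume 0 1 := by
    have : (fun x => ∫ y in (0:ℝ)..x, (1 - G₀ x + G₀ y)^2)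
        = fun x => x*(1 - G₀ x)^2 + 2*(1 - G₀ x)*(∫ y in (0:ℝ)..x, G₀ y)
            + ∫ y in (0:ℝ)..x, (G₀ y)^2 :=
      funext (inner_sq_repr G₀ G0_cont.measurable hbd0)
    rw [this]
    have hBcont : Continuous (fun x => ∫ y in (0:ℝ)..x, (G₀ y)^2) :=
      intervalIntegral.continuous_primitive
        (fun a b => (G0_cont.pow 2).intervalIntegrable a b) 0
    exact (((continuous_id.mul ((continuous_const.sub G0_cont).pow 2)).add
      ((continuous_const.mul (continuous_const.sub G0_cont)).mul hAcont)).add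
      hBcont).intervalIntegrable (μ := volume) 0 1
  have hIc : IntervalIntegrable
      (fun x => ∫ y in (0:ℝ)..x,
        (2 * ((1 - G₀ x + G₀ y) * ((G y - G₀ y) - (G x - G₀ x))))) volume 0 1 := by
    have : (fun x => ∫ y in (0:ℝ)..x,
          (2 * ((1 - G₀ x + G₀ y) * ((G y - G₀ y) - (G x - G₀ x)))))
        = fun x => 2 * (∫ y in (0:ℝ)..x, ((1 - G₀ x + G₀ y) * (G y - G₀ y)))
            - 2 * ((G x - G₀ x) * (x * (1 - G₀ x) + ∫ y in (0:ℝ)..x, G₀ y)) :=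
      funext (cross_repr G hGm hG0 hG1)
    rw [this]
    have hT1eq : (fun x => ∫ y in (0:ℝ)..x, ((1 - G₀ x + G₀ y) * (G y - G₀ y)))
        = fun x => (1 - G₀ x) * (∫ y in (0:ℝ)..x, (G y - G₀ y))
            + ∫ y in (0:ℝ)..x, G₀ y * (G y - G₀ y) :=
      funext (T1_repr G hGm hG0 hG1)
    have hT1cont : Continuous
        (fun x => ∫ y in (0:ℝ)..x, ((1 - G₀ x + G₀ y) * (G y - G₀ y))) := by
      rw [hT1eq]
      exact ((continuous_const.sub G0_cont).mul hSHcont).add hSG0Hcont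
    refine IntervalIntegrable.sub ((hT1cont.intervalIntegrable (μ := volume) 0 1).const_mul 2) ?_
    refine IntervalIntegrable.const_mul ?_ 2
    refine II_of_bdd_on ((H_meas G hGm).mul
      ((measurable_id.mul (continuous_const.sub G0_cont).measurable).add
        hAcont.measurable)) 2 ?_
    exact hpsibd_aux G hG0 hG1
  have hIq := II_qInner G hGm hG0 hG1
  -- outer decomposition
  have hdec : (fun x => ∫ y in (0:ℝ)..x, (1 - G x + G y)^2)
      = fun x => (∫ y in (0:ℝ)..x, (1 - G₀ x + G₀ y)^2)
          + ((∫ y in (0:ℝ)..x,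
              (2 * ((1 - G₀ x + G₀ y) * ((G y - G₀ y) - (G x - G₀ x)))))
            + ∫ y in (0:ℝ)..x, ((G y - G₀ y) - (G x - G₀ x))^2) :=
    funext (inner_decomp G hGm hG0 hG1)
  rw [hdec, intervalIntegral.integral_add hI0 (hIc.add hIq),
      intervalIntegral.integral_add hIc hIq, K_eq, cross_integral G hGm hG0 hG1]
  ring
lemma II_Hphi (G : ℝ → ℝ) (hGm : Measurable G) (hG0 : ∀ x, 0 ≤ G x) (hG1 : ∀ x, G x ≤ 1) :
    IntervalIntegrable (fun t => (G t - G₀ t) * (G₀ t - 2*t + 1/2)) volume 0 1 := by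
  refine II_of_bdd_on ((H_meas G hGm).mul
    ((G0_cont.measurable.sub (measurable_id'.const_mul 2)).add measurable_const)) 4
    (fun t ht => ?_)
  rw [Set.uIoc_of_le (by norm_num : (0:ℝ) ≤ 1)] at ht
  rw [Pi.mul_apply, abs_mul]
  have h1 : |G₀ t - 2*t + 1/2| ≤ 4 := by
    rw [abs_le]
    constructor
    · have := G0_nonneg t; linarith [ht.2]
    · have := G0_le_one t; linarith [ht.1.le]
  calc |G t - G₀ t| * |G₀ t - 2*t + 1/2| ≤ 1 * 4 :=
        mul_le_mul (H_bdd G hG0 hG1 t) h1 (abs_nonneg _) (by norm_num)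
  _ = 4 := by norm_num

lemma II_qy (G : ℝ → ℝ) (hGm : Measurable G) (hG0 : ∀ x, 0 ≤ G x) (hG1 : ∀ x, G x ≤ 1)
    (x a b : ℝ) :
    IntervalIntegrable (fun y => ((G y - G₀ y) - (G x - G₀ x))^2) volume a b := by
  refine II_of_bdd (((H_meas G hGm).sub measurable_const).pow_const 2) 4 (fun y => ?_) a b
  rw [abs_pow]
  have h : |(G y - G₀ y) - (G x - G₀ x)| ≤ 2 := by
    calc |(G y - G₀ y) - (G x - G₀ x)| ≤ |G y - G₀ y| + |G x - G₀ x| := abs_sub _ _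
    _ ≤ 1 + 1 := add_le_add (H_bdd G hG0 hG1 y) (H_bdd G hG0 hG1 x)
    _ = 2 := by norm_num
  show |(G y - G₀ y) - (G x - G₀ x)|^2 ≤ 4
  nlinarith [abs_nonneg ((G y - G₀ y) - (G x - G₀ x))]

/-- Lower bound on the quadratic inner integral. -/
lemma qInner_lb (G : ℝ → ℝ) (hGm : Measurable G) (hG0 : ∀ x, 0 ≤ G x) (hG1 : ∀ x, G x ≤ 1)
    {u v ε0 : ℝ} (h0u : 0 ≤ u) (huv : u < v) (hε0 : 0 < ε0)
    (hH : ∀ y ∈ Icc u v, ε0 ≤ |G y - G₀ y|)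
    {x : ℝ} (hvx : v ≤ x) (hx : G x - G₀ x = 0) :
    ε0^2 * (v - u) ≤ ∫ y in (0:ℝ)..x, ((G y - G₀ y) - (G x - G₀ x))^2 := by
  have h1 := intervalIntegral.integral_add_adjacent_intervals
    (II_qy G hGm hG0 hG1 x 0 u) (II_qy G hGm hG0 hG1 x u v)
  have h2 := intervalIntegral.integral_add_adjacent_intervals
    ((II_qy G hGm hG0 hG1 x 0 u).trans (II_qy G hGm hG0 hG1 x u v))
    (II_qy G hGm hG0 hG1 x v x)
  have hI1 : 0 ≤ ∫ y in (0:ℝ)..u, ((G y - G₀ y) - (G x - G₀ x))^2 :=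
    intervalIntegral.integral_nonneg h0u (fun y _ => sq_nonneg _)
  have hI3 : 0 ≤ ∫ y in v..x, ((G y - G₀ y) - (G x - G₀ x))^2 :=
    intervalIntegral.integral_nonneg hvx (fun y _ => sq_nonneg _)
  have hI2 : ε0^2 * (v - u) ≤ ∫ y in u..v, ((G y - G₀ y) - (G x - G₀ x))^2 := by
    have hmono := intervalIntegral.integral_mono_on (f := fun _ => ε0^2)
      (g := fun y => ((G y - G₀ y) - (G x - G₀ x))^2) huv.le intervalIntegrable_const
      (II_qy G hGm hG0 hG1 x u v) (fun y hy => by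
        show ε0^2 ≤ ((G y - G₀ y) - (G x - G₀ x))^2
        rw [hx, sub_zero]
        have := hH y hy
        nlinarith [abs_nonneg (G y - G₀ y), sq_abs (G y - G₀ y)])
    rw [intervalIntegral.integral_const, smul_eq_mul] at hmono
    linarith
  linarith

set_option maxHeartbeats 1000000 in
/-- The uniform distribution on `[1/4, 3/4]` is the unique minimizer of the inversion
functional `I(G) = ∫₀¹ ∫₀ˣ (1 - G(x) + G(y))² dy dx` over cdfs of probability
distributions on `[0,1]`: any cdf `G` differing from `G₀` has `I(G) > I(G₀) = 5/24`. -/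
theorem stmt_3 (G : ℝ → ℝ) (μ : Measure ℝ) [IsProbabilityMeasure μ]
    (hsupp : μ (Icc (0:ℝ) 1) = 1) (hG : ∀ x, G x = (μ (Iic x)).toReal)
    (hne : ∃ x ∈ Icc (0:ℝ) 1, G x ≠ G₀ x) :
    (∫ x in (0:ℝ)..1, ∫ y in (0:ℝ)..x, (1 - G₀ x + G₀ y) ^ 2) = 5 / 24 ∧
    (∫ x in (0:ℝ)..1, ∫ y in (0:ℝ)..x, (1 - G x + G y) ^ 2) > 5 / 24 := by
  have hGmono : Monotone G := by
    intro a b hab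
    rw [hG a, hG b]
    exact ENNReal.toReal_mono (measure_ne_top μ _) (measure_mono (Iic_subset_Iic.2 hab))
  have hGm : Measurable G := hGmono.measurable
  have hG0 : ∀ x, 0 ≤ G x := fun x => by rw [hG x]; exact ENNReal.toReal_nonneg
  have hG1 : ∀ x, G x ≤ 1 := by
    intro x
    rw [hG x]
    calc (μ (Iic x)).toReal ≤ (1:ENNReal).toReal :=
          ENNReal.toReal_mono ENNReal.one_ne_top prob_le_one
    _ = 1 := by simp
  have hG1eq : G 1 = 1 := by
    rw [hG 1]
    have hle : μ (Iic 1) ≤ 1 := prob_le_one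
    have hge : (1:ENNReal) ≤ μ (Iic 1) := hsupp ▸ measure_mono Icc_subset_Iic_self
    rw [le_antisymm hle hge]
    simp
  refine ⟨K_eq, ?_⟩
  have hJ := J_decomp G hGm hG0 hG1
  set C := ∫ t in (0:ℝ)..1, ((G t - G₀ t) * (G₀ t - 2*t + 1/2)) with hCdef
  set Q := ∫ x in (0:ℝ)..1, ∫ y in (0:ℝ)..x, ((G y - G₀ y) - (G x - G₀ x))^2 with hQdef
  have hCnn : 0 ≤ C :=
    intervalIntegral.integral_nonneg (by norm_num) (Hphi_nonneg G hG0 hG1)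
  have hQnn : 0 ≤ Q := by
    refine intervalIntegral.integral_nonneg (by norm_num) (fun x hx => ?_)
    exact intervalIntegral.integral_nonneg hx.1 (fun y _ => sq_nonneg _)
  rw [hJ]
  have hqnnIcc : ∀ x ∈ Icc (0:ℝ) 1,
      0 ≤ ∫ y in (0:ℝ)..x, ((G y - G₀ y) - (G x - G₀ x))^2 :=
    fun x hx => intervalIntegral.integral_nonneg hx.1 (fun y _ => sq_nonneg _)
  suffices hpos : 0 < 2 * C + Q by linarith
  by_cases hA : ∃ t, (0 ≤ t ∧ t < 1/4) ∧ 0 < G t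
  · obtain ⟨t, ⟨ht0, ht4⟩, htG⟩ := hA
    have hCpos : 0 < C := by
      refine integral_pos_on _ (II_Hphi G hGm hG0 hG1) (Hphi_nonneg G hG0 hG1)
        (u := t) (v := (t + 1/4)/2) (ε := G t * (1/2 - 2*((t + 1/4)/2))) ht0 (by linarith)
        (by linarith) (mul_pos htG (by linarith)) ?_
      intro s hs
      have hs4 : s ≤ 1/4 := by
        have := hs.2; linarith
      rw [G0_left hs4]
      have h1 : G t ≤ G s := hGmono hs.1
      nlinarith [hG0 s, hs.2]
    linarith
  by_cases hB : ∃ t, (3/4 < t ∧ t < 1) ∧ G t < 1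
  · obtain ⟨t, ⟨ht3, ht1⟩, htG⟩ := hB
    have hCpos : 0 < C := by
      refine integral_pos_on _ (II_Hphi G hGm hG0 hG1) (Hphi_nonneg G hG0 hG1)
        (u := (3/4 + t)/2) (v := t) (ε := (1 - G t) * (2*((3/4 + t)/2) - 3/2))
        (by linarith) (by linarith) (by linarith)
        (mul_pos (by linarith) (by linarith)) ?_
      intro s hs
      have hs3 : 3/4 ≤ s := by
        have := hs.1; linarith
      rw [G0_right hs3]
      have h1 : G s ≤ G t := hGmono hs.2
      nlinarith [hG1 s, hs.1]
    linarith
  push_neg at hA hB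
  have hz1 : ∀ t, 0 ≤ t → t < 1/4 → G t = 0 :=
    fun t h1 h2 => le_antisymm (hA t ⟨h1, h2⟩) (hG0 t)
  have hz2 : ∀ t, 3/4 < t → t < 1 → G t = 1 :=
    fun t h1 h2 => le_antisymm (hG1 t) (hB t ⟨h1, h2⟩)
  obtain ⟨t₀, ht₀, hne₀⟩ := hne
  have ht₀14 : 1/4 ≤ t₀ := by
    by_contra h
    push_neg at h
    exact hne₀ (by rw [hz1 t₀ ht₀.1 h, G0_left h.le])
  have ht₀34 : t₀ ≤ 3/4 := by
    by_contra h
    push_neg at h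
    rcases lt_or_eq_of_le ht₀.2 with h1 | h1
    · exact hne₀ (by rw [hz2 t₀ h h1, G0_right h.le])
    · exact hne₀ (by rw [h1, hG1eq, G0_right (by norm_num)])
  have hmid := G0_mid ht₀14 ht₀34
  -- H x = 0 for x ∈ [7/8, 15/16]
  have hHx0 : ∀ x ∈ Icc (7/8:ℝ) (15/16), G x - G₀ x = 0 := by
    intro x hx
    rw [hz2 x (by linarith [hx.1]) (by linarith [hx.2]), G0_right (by linarith [hx.1])]
    ring
  rcases lt_or_gt_of_ne hne₀ with hlt | hgt
  -- case G t₀ < G₀ t₀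
  · have h14 : 1/4 < t₀ := by
      rcases lt_or_eq_of_le ht₀14 with h | h
      · exact h
      · exfalso
        have h0 : G₀ t₀ = 0 := by rw [hmid, ← h]; norm_num
        rw [h0] at hlt
        exact absurd hlt (not_lt.2 (hG0 t₀))
    set δ := min ((G₀ t₀ - G t₀)/4) (t₀ - 1/4) with hδdef
    have hδ : 0 < δ := lt_min (by linarith) (by linarith)
    have hδ1 : δ ≤ (G₀ t₀ - G t₀)/4 := min_le_left _ _
    have hδ2 : δ ≤ t₀ - 1/4 := min_le_right _ _
    have hlt' : G t₀ < 2*t₀ - 1/2 := by rw [hmid] at hlt; exact hlt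
    have hδ1' : δ ≤ ((2*t₀ - 1/2) - G t₀)/4 := by rw [hmid] at hδ1; exact hδ1
    have hHlb : ∀ y ∈ Icc (t₀ - δ) t₀, (G₀ t₀ - G t₀)/2 ≤ |G y - G₀ y| := by
      intro y hy
      have hy14 : 1/4 ≤ y := by linarith [hy.1]
      have hy34 : y ≤ 3/4 := by linarith [hy.2]
      have h1 : G y ≤ G t₀ := hGmono hy.2
      have h2 : (2*t₀ - 1/2) - 2*δ ≤ 2*y - 1/2 := by linarith [hy.1]
      rw [G0_mid hy14 hy34, abs_sub_comm, abs_of_nonneg (by linarith), hmid]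
      linarith
    have hQpos : 0 < Q := by
      refine integral_pos_on _ (II_qInner G hGm hG0 hG1) hqnnIcc
        (u := 7/8) (v := 15/16) (ε := ((G₀ t₀ - G t₀)/2)^2 * δ)
        (by norm_num) (by norm_num) (by norm_num)
        (mul_pos (pow_pos (by linarith) 2) hδ) ?_
      intro x hx
      have hq := qInner_lb G hGm hG0 hG1 (u := t₀ - δ) (v := t₀) (by linarith)
        (by linarith) (by linarith) hHlb (by linarith [hx.1] : t₀ ≤ x) (hHx0 x hx)
      have he : t₀ - (t₀ - δ) = δ := by ring
      rw [he] at hq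
      exact hq
    linarith
  -- case G t₀ > G₀ t₀
  · have h34 : t₀ < 3/4 := by
      rcases lt_or_eq_of_le ht₀34 with h | h
      · exact h
      · exfalso
        have : G₀ t₀ = 1 := by rw [hmid, h]; norm_num
        rw [this] at hgt
        exact absurd hgt (not_lt.2 (hG1 t₀))
    set δ := min ((G t₀ - G₀ t₀)/4) (3/4 - t₀) with hδdef
    have hδ : 0 < δ := lt_min (by linarith) (by linarith)
    have hδ1 : δ ≤ (G t₀ - G₀ t₀)/4 := min_le_left _ _
    have hδ2 : δ ≤ 3/4 - t₀ := min_le_right _ _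
    have hgt' : 2*t₀ - 1/2 < G t₀ := by rw [hmid] at hgt; exact hgt
    have hδ1' : δ ≤ (G t₀ - (2*t₀ - 1/2))/4 := by rw [hmid] at hδ1; exact hδ1
    have hHlb : ∀ y ∈ Icc t₀ (t₀ + δ), (G t₀ - G₀ t₀)/2 ≤ |G y - G₀ y| := by
      intro y hy
      have hy14 : 1/4 ≤ y := by linarith [hy.1]
      have hy34 : y ≤ 3/4 := by linarith [hy.2]
      have h1 : G t₀ ≤ G y := hGmono hy.1
      have h2 : 2*y - 1/2 ≤ (2*t₀ - 1/2) + 2*δ := by linarith [hy.2]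
      rw [G0_mid hy14 hy34, abs_of_nonneg (by linarith), hmid]
      linarith
    have hQpos : 0 < Q := by
      refine integral_pos_on _ (II_qInner G hGm hG0 hG1) hqnnIcc
        (u := 7/8) (v := 15/16) (ε := ((G t₀ - G₀ t₀)/2)^2 * δ)
        (by norm_num) (by norm_num) (by norm_num)
        (mul_pos (pow_pos (by linarith) 2) hδ) ?_
      intro x hx
      have hq := qInner_lb G hGm hG0 hG1 (u := t₀) (v := t₀ + δ) (by linarith)
        (by linarith) (by linarith) hHlb (by linarith [hx.1] : t₀ + δ ≤ x) (hHx0 x hx)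
      have he : t₀ + δ - t₀ = δ := by ring
      rw [he] at hq
      exact hq
    linarith
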